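/- For every two-qubit unitary u ∈ Matrix.unitaryGroup (Fin 2 × Fin 2) ℂ there exist a, b, c ∈ Matrix.unitaryGroup (Fin 2) ℂ such that the matrix (a ⊗ b) * CNOT * (1 ⊗ c) agrees with u in its entire (0,0)-th row: for all q : Fin 2 × Fin 2, ((a ⊗ b) * CNOT * (1 ⊗ c)) (0,0) q = u (0,0) q. (Hence one CNOT suffices to simulate any two-qubit operator up to a projective measurement onto span(|00⟩) and its orthogonal complement.) -/

import Mathlib

open Matrix Kronecker

noncomputable section

def σy : Matrix (Fin 2) (Fin 2) ℂ := !![0, -Complex.I; Complex.I, 0]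

def eps (φ : Fin 2 × Fin 2 → ℂ) : ℂ := φ ⬝ᵥ ((σy ⊗ₖ σy).mulVec φ)

def CNOT : Matrix (Fin 2 × Fin 2) (Fin 2 × Fin 2) ℂ :=
  Matrix.of fun p q => if p.1 = q.1 ∧ p.2 = q.1 + q.2 then 1 else 0

def e (i j : Fin 2) : Fin 2 × Fin 2 → ℂ := Pi.single (i, j) 1

def e₀ : Fin 2 × Fin 2 → ℂ := e 0 0

def Rz (θ : ℝ) : Matrix (Fin 2) (Fin 2) ℂ :=
  !![Complex.exp (Complex.I * θ / 2), 0; 0, Complex.exp (-Complex.I * θ / 2)]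

def Rx (θ : ℝ) : Matrix (Fin 2) (Fin 2) ℂ :=
  !![(Real.cos (θ / 2) : ℂ), Complex.I * Real.sin (θ / 2);
     Complex.I * Real.sin (θ / 2), (Real.cos (θ / 2) : ℂ)]

open ComplexConjugate

lemma entry_formula (a b c : Matrix (Fin 2) (Fin 2) ℂ) (q : Fin 2 × Fin 2) :
    ((a ⊗ₖ b) * CNOT * ((1 : Matrix (Fin 2) (Fin 2) ℂ) ⊗ₖ c)) (0, 0) q
      = a 0 q.1 * (b 0 0 * c q.1 q.2 + b 0 1 * c (q.1 + 1) q.2) := by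
  obtain ⟨q1, q2⟩ := q
  simp only [Matrix.mul_apply, CNOT, Fintype.sum_prod_type, Fin.sum_univ_two,
    Matrix.kroneckerMap_apply, Matrix.one_apply, Matrix.of_apply]
  fin_cases q1 <;> fin_cases q2 <;> simp <;> ring


lemma genU_mem (c : Matrix (Fin 2) (Fin 2) ℂ)
    (h00 : c 0 0 * conj (c 0 0) + c 0 1 * conj (c 0 1) = 1)
    (h01 : c 0 0 * conj (c 1 0) + c 0 1 * conj (c 1 1) = 0)
    (h11 : c 1 0 * conj (c 1 0) + c 1 1 * conj (c 1 1) = 1) :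
    c ∈ Matrix.unitaryGroup (Fin 2) ℂ := by
  have h01' := congrArg (starRingEnd ℂ) h01
  simp only [map_add, _root_.map_mul, Complex.conj_conj, map_zero] at h01'
  rw [Matrix.mem_unitaryGroup_iff]
  ext i j
  fin_cases i <;> fin_cases j <;>
    simp [Matrix.mul_apply, Fin.sum_univ_two, Matrix.conjTranspose_apply, Matrix.one_apply]
  · exact h00
  · exact h01
  · linear_combination h01'
  · exact h11


lemma product_decomp (v00 v01 v10 v11 : ℂ)
    (hnorm : v00 * conj v00 + v01 * conj v01 + v10 * conj v10 + v11 * conj v11 = 1)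
    (hd : v00 * v11 = v01 * v10) :
    ∃ w0 w1 x0 x1 : ℂ, (w0 * conj w0 + w1 * conj w1 = 1) ∧
      (x0 * conj x0 + x1 * conj x1 = 1) ∧
      v00 = w0 * x0 ∧ v01 = w0 * x1 ∧ v10 = w1 * x0 ∧ v11 = w1 * x1 := by
  by_cases h0 : v00 = 0 ∧ v01 = 0
  · obtain ⟨h00, h01⟩ := h0
    refine ⟨0, 1, v10, v11, by simp, ?_, by simp [h00], by simp [h01], by simp, by simp⟩
    rw [h00, h01] at hnorm
    linear_combination hnorm
  · have hs0 : 0 < Complex.normSq v00 + Complex.normSq v01 := by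
      rcases not_and_or.mp h0 with h | h
      · have := Complex.normSq_pos.mpr h
        have := Complex.normSq_nonneg v01
        linarith
      · have := Complex.normSq_pos.mpr h
        have := Complex.normSq_nonneg v00
        linarith
    set s0 : ℝ := Complex.normSq v00 + Complex.normSq v01 with hs0def
    set n0 : ℝ := Real.sqrt s0 with hn0def
    have hn0pos : 0 < n0 := Real.sqrt_pos.mpr hs0
    have hn0ne : (n0 : ℂ) ≠ 0 := by exact_mod_cast hn0pos.ne'
    have hmul : n0 * n0 = s0 := Real.mul_self_sqrt hs0.le
    have hnn : (n0 : ℂ) * (n0 : ℂ) = v00 * conj v00 + v01 * conj v01 := by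
      rw [Complex.mul_conj, Complex.mul_conj, ← Complex.ofReal_add, ← hs0def, ← hmul]
      push_cast
      ring
    set ζ : ℂ := v00 * conj v10 + v01 * conj v11 with hζdef
    have hLag : ζ * conj ζ = (v00 * conj v00 + v01 * conj v01) *
        (v10 * conj v10 + v11 * conj v11) := by
      simp only [hζdef, map_add, _root_.map_mul, Complex.conj_conj]
      linear_combination (conj v01 * conj v10 - conj v00 * conj v11) * hd
    refine ⟨(n0 : ℂ), conj ζ / n0, v00 / n0, v01 / n0, ?_, ?_, ?_, ?_, ?_, ?_⟩
    · have hconjn : conj (n0 : ℂ) = (n0 : ℂ) := Complex.conj_ofReal n0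
      simp only [map_div₀, Complex.conj_conj, hconjn]
      field_simp [hconjn]
      linear_combination (↑n0 * ↑n0 + (v00 * conj v00 + v01 * conj v01) - 1) * hnn + hLag +
        (v00 * conj v00 + v01 * conj v01) * hnorm
    · have hconjn : conj (n0 : ℂ) = (n0 : ℂ) := Complex.conj_ofReal n0
      simp only [map_div₀, hconjn]
      field_simp [hconjn]
      linear_combination -hnn
    · field_simp
    · field_simp
    · rw [div_mul_div_comm, eq_div_iff (mul_ne_zero hn0ne hn0ne)]
      simp only [hζdef, map_add, _root_.map_mul, Complex.conj_conj]
      linear_combination v10 * hnn - conj v01 * hd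
    · rw [div_mul_div_comm, eq_div_iff (mul_ne_zero hn0ne hn0ne)]
      simp only [hζdef, map_add, _root_.map_mul, Complex.conj_conj]
      linear_combination v11 * hnn + conj v00 * hd

-- branch 1 construction
lemma branch1 (w0 w1 x0 x1 : ℂ) (v : Fin 2 → Fin 2 → ℂ)
    (hw : w0 * conj w0 + w1 * conj w1 = 1)
    (hx : x0 * conj x0 + x1 * conj x1 = 1)
    (h00 : v 0 0 = w0 * x0) (h01 : v 0 1 = w0 * x1)
    (h10 : v 1 0 = w1 * x0) (h11 : v 1 1 = w1 * x1) :
    ∃ a ∈ Matrix.unitaryGroup (Fin 2) ℂ, ∃ b ∈ Matrix.unitaryGroup (Fin 2) ℂ,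
      ∃ c ∈ Matrix.unitaryGroup (Fin 2) ℂ,
        ∀ q1 q2 : Fin 2, a 0 q1 * (b 0 0 * c q1 q2 + b 0 1 * c (q1 + 1) q2) = v q1 q2 := by
  set p : ℝ := Real.sqrt 2 / 2 with hpdef
  have h2 : Real.sqrt 2 * Real.sqrt 2 = 2 := Real.mul_self_sqrt (by norm_num)
  have hp : p * p = 1 / 2 := by rw [hpdef, div_mul_div_comm, h2]; norm_num
  set P : ℂ := (p : ℂ) with hPdef
  have hPC : P * P = 1 / 2 := by
    rw [hPdef, ← Complex.ofReal_mul, hp]; norm_num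
  have hPconj : conj P = P := Complex.conj_ofReal p
  refine ⟨!![w0, w1; -conj w1, conj w0], genU_mem _ (by simp; try linear_combination hw)
      (by simp; try ring) (by simp; try linear_combination hw), ?_⟩
  refine ⟨!![P, P; -P, P], genU_mem _ (by simp [hPconj]; try linear_combination 2*hPC)
      (by simp [hPconj]; try ring) (by simp [hPconj]; try linear_combination 2*hPC), ?_⟩
  refine ⟨!![P*(x0 - conj x1), P*(x1 + conj x0); P*(x0 + conj x1), P*(x1 - conj x0)],
      genU_mem _ ?_ ?_ ?_, ?_⟩
  · simp [hPconj]
    linear_combination 2 * P * P * hx + 2 * hPC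
  · simp [hPconj]
    ring
  · simp [hPconj]
    linear_combination 2 * P * P * hx + 2 * hPC
  · intro q1 q2
    fin_cases q1 <;> fin_cases q2 <;> simp
    · rw [h00]; linear_combination 2 * w0 * x0 * hPC
    · rw [h01]; linear_combination 2 * w0 * x1 * hPC
    · rw [h10]; linear_combination 2 * w1 * x0 * hPC
    · rw [h11]; linear_combination 2 * w1 * x1 * hPC

set_option maxHeartbeats 1000000 in
lemma branch2 (v : Fin 2 → Fin 2 → ℂ)
    (hnorm : v 0 0 * conj (v 0 0) + v 0 1 * conj (v 0 1) + v 1 0 * conj (v 1 0)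
      + v 1 1 * conj (v 1 1) = 1)
    (hdelta : v 0 0 * v 1 1 ≠ v 0 1 * v 1 0) :
    ∃ a ∈ Matrix.unitaryGroup (Fin 2) ℂ, ∃ b ∈ Matrix.unitaryGroup (Fin 2) ℂ,
      ∃ c ∈ Matrix.unitaryGroup (Fin 2) ℂ,
        ∀ q1 q2 : Fin 2, a 0 q1 * (b 0 0 * c q1 q2 + b 0 1 * c (q1 + 1) q2) = v q1 q2 := by
  set v00 := v 0 0 with hv00
  set v01 := v 0 1 with hv01
  set v10 := v 1 0 with hv10
  set v11 := v 1 1 with hv11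
  clear_value v00 v01 v10 v11
  -- positivity of row norms
  have hv0ne : ¬(v00 = 0 ∧ v01 = 0) := by
    rintro ⟨h1, h2⟩; exact hdelta (by rw [h1, h2]; ring)
  have hv1ne : ¬(v10 = 0 ∧ v11 = 0) := by
    rintro ⟨h1, h2⟩; exact hdelta (by rw [h1, h2]; ring)
  set s0 : ℝ := Complex.normSq v00 + Complex.normSq v01 with hs0def
  set s1 : ℝ := Complex.normSq v10 + Complex.normSq v11 with hs1def
  have hs0 : 0 < s0 := by
    rw [hs0def]
    rcases not_and_or.mp hv0ne with h | h
    · have := Complex.normSq_pos.mpr h; have := Complex.normSq_nonneg v01; linarith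
    · have := Complex.normSq_pos.mpr h; have := Complex.normSq_nonneg v00; linarith
  have hs1 : 0 < s1 := by
    rw [hs1def]
    rcases not_and_or.mp hv1ne with h | h
    · have := Complex.normSq_pos.mpr h; have := Complex.normSq_nonneg v11; linarith
    · have := Complex.normSq_pos.mpr h; have := Complex.normSq_nonneg v10; linarith
  clear_value s0 s1
  set n0 : ℝ := Real.sqrt s0 with hn0def
  set n1 : ℝ := Real.sqrt s1 with hn1def
  have hn0 : 0 < n0 := Real.sqrt_pos.mpr hs0
  have hn1 : 0 < n1 := Real.sqrt_pos.mpr hs1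
  have hnn2 : (n0 * n1) ^ 2 = s0 * s1 := by
    rw [hn0def, hn1def, mul_pow, Real.sq_sqrt hs0.le, Real.sq_sqrt hs1.le]
  have hn0ne : (n0 : ℂ) ≠ 0 := by exact_mod_cast hn0.ne'
  have hn1ne : (n1 : ℂ) ≠ 0 := by exact_mod_cast hn1.ne'
  have hn0sq : (n0 : ℂ) * (n0 : ℂ) = v00 * conj v00 + v01 * conj v01 := by
    rw [Complex.mul_conj, Complex.mul_conj, ← Complex.ofReal_add, ← hs0def,
      ← Real.mul_self_sqrt hs0.le, ← hn0def]
    push_cast; ring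
  have hn1sq : (n1 : ℂ) * (n1 : ℂ) = v10 * conj v10 + v11 * conj v11 := by
    rw [Complex.mul_conj, Complex.mul_conj, ← Complex.ofReal_add, ← hs1def,
      ← Real.mul_self_sqrt hs1.le, ← hn1def]
    push_cast; ring
  clear_value n0 n1
  -- delta and zeta
  set δ : ℂ := v00 * v11 - v01 * v10 with hδdef
  have hδne : δ ≠ 0 := sub_ne_zero.mpr hdelta
  set ζ : ℂ := v00 * conj v10 + v01 * conj v11 with hζdef
  set d : ℝ := ‖δ‖ with hddef
  set ρ : ℝ := ‖ζ‖ with hρdef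
  have hd : 0 < d := by simpa [hddef] using hδne
  clear_value δ ζ
  have hρ0 : 0 ≤ ρ := hρdef ▸ norm_nonneg ζ
  clear_value d ρ
  -- Lagrange identity
  have hLagC : ζ * conj ζ + δ * conj δ =
      (v00 * conj v00 + v01 * conj v01) * (v10 * conj v10 + v11 * conj v11) := by
    simp only [hζdef, hδdef, map_add, map_sub, _root_.map_mul, Complex.conj_conj]
    ring
  have hLagR : ρ ^ 2 + d ^ 2 = s0 * s1 := by
    have h := hLagC
    rw [Complex.mul_conj, Complex.mul_conj, Complex.mul_conj, Complex.mul_conj,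
      Complex.mul_conj, Complex.mul_conj] at h
    have h2 : ((Complex.normSq ζ + Complex.normSq δ : ℝ) : ℂ) = ((s0 * s1 : ℝ) : ℂ) := by
      push_cast [hs0def, hs1def]
      linear_combination h
    have h3 := Complex.ofReal_inj.mp h2
    rw [hρdef, hddef, Complex.sq_norm, Complex.sq_norm]
    linarith
  -- the angle parameters
  set k : ℝ := d / (n0 * n1) with hkdef
  set t : ℝ := ρ / (n0 * n1) with htdef
  have hn01 : (0:ℝ) < n0 * n1 := mul_pos hn0 hn1
  have ht2k2 : t ^ 2 + k ^ 2 = 1 := by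
    rw [htdef, hkdef, div_pow, div_pow, hnn2]
    field_simp
    linarith [hLagR]
  have hk0 : 0 < k := hkdef ▸ div_pos hd hn01
  have ht0 : 0 ≤ t := htdef ▸ div_nonneg hρ0 hn01.le
  clear_value k t
  have hk1 : k ≤ 1 := by nlinarith
  set p : ℝ := Real.sqrt ((1 + k) / 2) with hpdef
  set q : ℝ := Real.sqrt ((1 - k) / 2) with hqdef
  have hp2 : p ^ 2 = (1 + k) / 2 := by rw [hpdef]; exact Real.sq_sqrt (by linarith)
  have hq2 : q ^ 2 = (1 - k) / 2 := by rw [hqdef]; exact Real.sq_sqrt (by linarith)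
  have hp0 : 0 ≤ p := hpdef ▸ Real.sqrt_nonneg _
  have hq0 : 0 ≤ q := hqdef ▸ Real.sqrt_nonneg _
  clear_value p q
  have h2pq : 2 * p * q = t := by
    have h1 : (2 * p * q) ^ 2 = t ^ 2 := by
      have e : (2 * p * q) ^ 2 = 4 * p ^ 2 * q ^ 2 := by ring
      rw [e, hp2, hq2]; nlinarith
    calc 2 * p * q = Real.sqrt ((2 * p * q) ^ 2) :=
          (Real.sqrt_sq (mul_nonneg (mul_nonneg (by norm_num) hp0) hq0)).symm
      _ = Real.sqrt (t ^ 2) := by rw [h1]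
      _ = t := Real.sqrt_sq ht0
  -- complex versions
  set P : ℂ := (p : ℂ) with hPdef
  set Q : ℂ := (q : ℂ) with hQdef
  set T : ℂ := (t : ℂ) with hTdef
  set K : ℂ := (k : ℂ) with hKdef
  clear_value P Q T K
  have hPc : conj P = P := by rw [hPdef]; exact Complex.conj_ofReal p
  have hQc : conj Q = Q := by rw [hQdef]; exact Complex.conj_ofReal q
  have hTc : conj T = T := by rw [hTdef]; exact Complex.conj_ofReal t
  have hKc : conj K = K := by rw [hKdef]; exact Complex.conj_ofReal k
  have hKne : K ≠ 0 := by
    rw [hKdef]; exact_mod_cast hk0.ne'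
  have hPQ1 : P ^ 2 + Q ^ 2 = 1 := by
    rw [hPdef, hQdef]
    have : p ^ 2 + q ^ 2 = 1 := by rw [hp2, hq2]; ring
    exact_mod_cast congrArg (fun r : ℝ => (r : ℂ)) this
  have hPQk : P ^ 2 - Q ^ 2 = K := by
    rw [hPdef, hQdef, hKdef]
    have : p ^ 2 - q ^ 2 = k := by rw [hp2, hq2]; ring
    exact_mod_cast congrArg (fun r : ℝ => (r : ℂ)) this
  have hPQt : 2 * (P * Q) = T := by
    rw [hPdef, hQdef, hTdef]
    have h : ((2 * p * q : ℝ) : ℂ) = ((t : ℝ) : ℂ) := by exact_mod_cast h2pq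
    push_cast at h
    linear_combination h
  -- the phase μ
  set μ : ℂ := if ζ = 0 then 1 else conj ζ / ρ with hμdef
  clear_value μ
  have hρζ : (ρ : ℂ) * (ρ : ℂ) = ζ * conj ζ := by
    rw [Complex.mul_conj, ← Complex.ofReal_mul, hρdef]
    norm_cast
    rw [← Complex.sq_norm]; ring
  have hμμ : μ * conj μ = 1 := by
    rw [hμdef]
    by_cases hz : ζ = 0
    · simp [hz]
    · have hρne : (ρ : ℂ) ≠ 0 := by
        rw [hρdef]; exact_mod_cast (norm_pos_iff.mpr hz).ne'
      simp only [hz, if_false, map_div₀, Complex.conj_conj, Complex.conj_ofReal]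
      field_simp
      linear_combination -hρζ
  have hμζ : μ * ζ = (ρ : ℂ) := by
    rw [hμdef]
    by_cases hz : ζ = 0
    · simp [hz, hρdef]
    · have hρne : (ρ : ℂ) ≠ 0 := by
        rw [hρdef]; exact_mod_cast (norm_pos_iff.mpr hz).ne'
      simp only [hz, if_false]
      field_simp
      linear_combination -hρζ
  have hμμ' : conj μ * μ = 1 := by rw [mul_comm]; exact hμμ
  -- conjugates
  have hμζc : conj μ * conj ζ = (ρ : ℂ) := by
    have h := congrArg conj hμζ
    simpa [Complex.conj_ofReal] using h
  have hζdefc : conj ζ = conj v00 * v10 + conj v01 * v11 := by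
    have h := congrArg conj hζdef
    simpa [Complex.conj_conj] using h
  have hTn : T * (↑n0 * ↑n1) = (ρ : ℂ) := by
    have hr : t * (n0 * n1) = ρ := by rw [htdef]; field_simp
    rw [hTdef]
    have h : ((t * (n0 * n1) : ℝ) : ℂ) = ((ρ : ℝ) : ℂ) := by exact_mod_cast hr
    push_cast at h
    linear_combination h
  -- the unit vectors x and y
  set x0 : ℂ := v00 / n0 with hx0def
  set x1 : ℂ := v01 / n0 with hx1def
  set y0 : ℂ := conj μ * v10 / n1 with hy0def
  set y1 : ℂ := conj μ * v11 / n1 with hy1def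
  clear_value x0 x1 y0 y1
  have hx0 : (n0 : ℂ) * x0 = v00 := by rw [hx0def]; field_simp
  have hx1 : (n0 : ℂ) * x1 = v01 := by rw [hx1def]; field_simp
  have hy0 : (n1 : ℂ) * y0 = conj μ * v10 := by rw [hy0def]; field_simp; try ring
  have hy1 : (n1 : ℂ) * y1 = conj μ * v11 := by rw [hy1def]; field_simp; try ring
  have hx0c : (n0 : ℂ) * conj x0 = conj v00 := by
    have h := congrArg conj hx0; simpa [Complex.conj_ofReal] using h
  have hx1c : (n0 : ℂ) * conj x1 = conj v01 := by
    have h := congrArg conj hx1; simpa [Complex.conj_ofReal] using h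
  have hy0c : (n1 : ℂ) * conj y0 = μ * conj v10 := by
    have h := congrArg conj hy0; simpa [Complex.conj_ofReal, Complex.conj_conj] using h
  have hy1c : (n1 : ℂ) * conj y1 = μ * conj v11 := by
    have h := congrArg conj hy1; simpa [Complex.conj_ofReal, Complex.conj_conj] using h
  -- Gram identities
  have hxx : x0 * conj x0 + x1 * conj x1 = 1 := by
    apply mul_left_cancel₀ (mul_ne_zero hn0ne hn0ne)
    rw [mul_one]
    linear_combination (↑n0 * conj x0) * hx0 + v00 * hx0c + (↑n0 * conj x1) * hx1 +
      v01 * hx1c - hn0sq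
  have hyy : y0 * conj y0 + y1 * conj y1 = 1 := by
    apply mul_left_cancel₀ (mul_ne_zero hn1ne hn1ne)
    rw [mul_one]
    linear_combination (↑n1 * conj y0) * hy0 + (conj μ * v10) * hy0c + (v10 * conj v10) * hμμ +
      (↑n1 * conj y1) * hy1 + (conj μ * v11) * hy1c + (v11 * conj v11) * hμμ - hn1sq
  have hxy : x0 * conj y0 + x1 * conj y1 = T := by
    apply mul_left_cancel₀ (mul_ne_zero hn0ne hn1ne)
    linear_combination (↑n1 * conj y0) * hx0 + v00 * hy0c + (↑n1 * conj y1) * hx1 +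
      v01 * hy1c + hμζ - μ * hζdef - hTn
  have hyx : y0 * conj x0 + y1 * conj x1 = T := by
    apply mul_left_cancel₀ (mul_ne_zero hn0ne hn1ne)
    linear_combination (↑n0 * conj x0) * hy0 + (conj μ * v10) * hx0c + (↑n0 * conj x1) * hy1 +
      (conj μ * v11) * hx1c + hμζc - conj μ * hζdefc - hTn
  -- the matrices
  refine ⟨!![(n0 : ℂ), μ * n1; -conj (μ * (n1:ℂ)), conj ((n0:ℂ))],
    genU_mem _ ?_ ?_ ?_, ?_⟩
  · simp [Complex.conj_ofReal, _root_.map_mul]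
    linear_combination hn0sq + (↑n1 * ↑n1) * hμμ + hn1sq + hnorm
  · simp [Complex.conj_ofReal, _root_.map_mul]
    ring
  · simp [Complex.conj_ofReal, _root_.map_mul]
    linear_combination hn0sq + (↑n1 * ↑n1) * hμμ + hn1sq + hnorm
  refine ⟨!![P, Q; -Q, P], genU_mem _ ?_ ?_ ?_, ?_⟩
  · simp [hPc, hQc]
    linear_combination hPQ1
  · simp [hPc, hQc]
    ring
  · simp [hPc, hQc]
    linear_combination hPQ1
  refine ⟨!![K⁻¹ * (P * x0 - Q * y0), K⁻¹ * (P * x1 - Q * y1);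
      K⁻¹ * (-(Q * x0) + P * y0), K⁻¹ * (-(Q * x1) + P * y1)],
    genU_mem _ ?_ ?_ ?_, ?_⟩
  · simp [hPc, hQc, hKc]
    field_simp [hKne]
    linear_combination P^2 * hxx + Q^2 * hyy - P*Q*hxy - P*Q*hyx -
      (P^2+Q^2) * hPQ1 + (2*P*Q) * hPQt + (K + P^2 - Q^2) * hPQk
  · simp [hPc, hQc, hKc]
    field_simp [hKne]
    linear_combination -(P*Q)*hxx - P*Q*hyy + P^2*hxy + Q^2*hyx +
      T * hPQ1 - hPQt
  · simp [hPc, hQc, hKc]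
    field_simp [hKne]
    linear_combination Q^2 * hxx + P^2 * hyy - P*Q*hxy - P*Q*hyx -
      (P^2+Q^2) * hPQ1 + (2*P*Q) * hPQt + (K + P^2 - Q^2) * hPQk
  · intro q1 q2
    fin_cases q1 <;> fin_cases q2 <;> simp
    · rw [← hv00]
      field_simp [hKne]
      linear_combination (↑n0 * x0) * hPQk + K * hx0
    · rw [← hv01]
      field_simp [hKne]
      linear_combination (↑n0 * x1) * hPQk + K * hx1
    · rw [← hv10]
      field_simp [hKne]
      linear_combination (μ * ↑n1 * y0) * hPQk + K * μ * hy0 + K * v10 * hμμ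
    · rw [← hv11]
      field_simp [hKne]
      linear_combination (μ * ↑n1 * y1) * hPQk + K * μ * hy1 + K * v11 * hμμ


theorem one_cnot_first_row (u : Matrix (Fin 2 × Fin 2) (Fin 2 × Fin 2) ℂ)
    (hu : u ∈ Matrix.unitaryGroup (Fin 2 × Fin 2) ℂ) :
    ∃ a ∈ Matrix.unitaryGroup (Fin 2) ℂ, ∃ b ∈ Matrix.unitaryGroup (Fin 2) ℂ,
      ∃ c ∈ Matrix.unitaryGroup (Fin 2) ℂ,
        ∀ q : Fin 2 × Fin 2,
          ((a ⊗ₖ b) * CNOT * ((1 : Matrix (Fin 2) (Fin 2) ℂ) ⊗ₖ c)) (0, 0) q =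
            u (0, 0) q := by
  set v : Fin 2 → Fin 2 → ℂ := fun i j => u (0, 0) (i, j) with hvdef
  have hnorm : v 0 0 * conj (v 0 0) + v 0 1 * conj (v 0 1) + v 1 0 * conj (v 1 0)
      + v 1 1 * conj (v 1 1) = 1 := by
    have h1 := Matrix.mem_unitaryGroup_iff.mp hu
    have h2 := congrFun (congrFun h1 (0, 0)) (0, 0)
    simp only [Matrix.mul_apply, Fintype.sum_prod_type, Fin.sum_univ_two,
      Matrix.conjTranspose_apply, Matrix.one_apply, Matrix.star_apply, if_true,
      RCLike.star_def] at h2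
    linear_combination h2
  have key : ∃ a ∈ Matrix.unitaryGroup (Fin 2) ℂ, ∃ b ∈ Matrix.unitaryGroup (Fin 2) ℂ,
      ∃ c ∈ Matrix.unitaryGroup (Fin 2) ℂ,
        ∀ q1 q2 : Fin 2, a 0 q1 * (b 0 0 * c q1 q2 + b 0 1 * c (q1 + 1) q2) = v q1 q2 := by
    by_cases hd : v 0 0 * v 1 1 = v 0 1 * v 1 0
    · obtain ⟨w0, w1, x0, x1, hw, hx, h00, h01, h10, h11⟩ :=
        product_decomp (v 0 0) (v 0 1) (v 1 0) (v 1 1) hnorm hd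
      exact branch1 w0 w1 x0 x1 v hw hx h00 h01 h10 h11
    · exact branch2 v hnorm hd
  obtain ⟨a, ha, b, hb, c, hc, h⟩ := key
  refine ⟨a, ha, b, hb, c, hc, fun q => ?_⟩
  rw [entry_formula]
  exact h q.1 q.2
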